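/- arXiv:1706.09873 — 5 statements merged into one kernel-verified Lean document; each statement's English description precedes it below -/
import Mathlib

section
/- If K is the Q-augmentation of K̇ (so K = K̇ followed by refreshing the auxiliary variable from Q), then μK = μ implies μ* K̇ = μ* for the T-marginal μ* of μ; conversely μ̇K̇ = μ̇ implies μK = μ for μ(dθ,dy) = μ̇(dθ)Q_θ(dy). The same implications hold with 'invariant' replaced by 'reversible'. -/
open MeasureTheory ProbabilityTheory Filter
open scoped ENNReal

section Defs
variable {X : Type*} [MeasurableSpace X]

/-- The Markov operator `K f (x) = ∫ f(y) K(x, dy)`. -/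
noncomputable def kOp (K : Kernel X X) (f : X → ℝ) : X → ℝ :=
  fun x => ∫ y, f y ∂(K x)

/-- Iterates of the Markov operator: `kIter K n f = Kⁿ f`. -/
noncomputable def kIter (K : Kernel X X) : ℕ → (X → ℝ) → (X → ℝ)
  | 0, f => f
  | n + 1, f => kOp K (kIter K n f)

/-- Iterates of a kernel, as kernels. -/
noncomputable def kIterK (K : Kernel X X) : ℕ → Kernel X X
  | 0 => Kernel.id
  | n + 1 => K.comp (kIterK K n)

/-- Detailed balance / reversibility of `K` with respect to `μ`. -/
def Reversible (μ : Measure X) (K : Kernel X X) : Prop :=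
  μ.compProd K = (μ.compProd K).map Prod.swap

/-- Invariance of `μ` for `K`. -/
def Invariant (μ : Measure X) (K : Kernel X X) : Prop :=
  μ.bind (fun x => K x) = μ

/-- Harris ergodicity: invariance, ψ-irreducibility, and triviality of bounded
harmonic functions (a standing proxy for Harris recurrence). -/
def HarrisErgodic (μ : Measure X) (K : Kernel X X) : Prop :=
  Invariant μ K ∧
  (∃ ψ : Measure X, ψ ≠ 0 ∧ ∀ A : Set X, MeasurableSet A → 0 < ψ A →
    ∀ x : X, ∃ n : ℕ, 0 < kIterK K n x A) ∧
  (∀ f : X → ℝ, Measurable f → (∃ C, ∀ x, |f x| ≤ C) → kOp K f = f →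
    ∃ c : ℝ, f =ᵐ[μ] fun _ => c)

/-- Centering of `f` with respect to `μ`. -/
noncomputable def center (μ : Measure X) (f : X → ℝ) : X → ℝ :=
  fun x => f x - ∫ y, f y ∂μ

/-- `n⁻¹ E[(∑_{k<n} (f(X_k) - μ(f)))²]` for the stationary chain with kernel `K`,
expanded via stationarity into covariances `∫ f̄ · K^{|i-j|} f̄ dμ`. -/
noncomputable def avarSeq (μ : Measure X) (K : Kernel X X) (f : X → ℝ) (n : ℕ) : ℝ :=
  (n : ℝ)⁻¹ * ∑ i ∈ Finset.range n, ∑ j ∈ Finset.range n,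
    ∫ x, center μ f x * kIter K (max i j - min i j) (center μ f) x ∂μ

/-- `v` is the asymptotic variance of `f` for the stationary chain with kernel `K`. -/
def IsAvar (μ : Measure X) (K : Kernel X X) (f : X → ℝ) (v : ℝ) : Prop :=
  Tendsto (avarSeq μ K f) atTop (nhds v)

/-- The variance `var_μ(f)`. -/
noncomputable def varOf (μ : Measure X) (f : X → ℝ) : ℝ :=
  ∫ x, f x ^ 2 ∂μ - (∫ x, f x ∂μ) ^ 2

/-- The Dirichlet form `E_K(f) = ⟨f, (I - K) f⟩_μ`. -/
noncomputable def dirichlet (μ : Measure X) (K : Kernel X X) (f : X → ℝ) : ℝ :=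
  ∫ x, f x * (f x - kOp K f x) ∂μ

end Defs

namespace AugAux


variable {α β γ : Type*} [MeasurableSpace α] [MeasurableSpace β] [MeasurableSpace γ]

lemma map_bind (μ : Measure α) {f : α → Measure β} (hf : Measurable f)
    {g : β → γ} (hg : Measurable g) :
    (μ.bind f).map g = μ.bind (fun x => (f x).map g) := by
  have hm : Measurable fun x => (f x).map g := (Measure.measurable_map g hg).comp hf
  ext s hs
  rw [Measure.map_apply hg hs, Measure.bind_apply (hg hs) hf.aemeasurable, Measure.bind_apply hs hm.aemeasurable]
  exact lintegral_congr fun a => (Measure.map_apply hg hs).symm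

lemma bind_map (μ : Measure α) {g : α → β} (hg : Measurable g)
    {f : β → Measure γ} (hf : Measurable f) :
    (μ.map g).bind f = μ.bind (f ∘ g) := by
  rw [Measure.bind, Measure.bind, Measure.map_map hf hg]

lemma measurable_map_prod_mk (ν : Measure β) [SFinite ν] :
    Measurable fun x : α => ν.map (Prod.mk x) := by
  refine Measure.measurable_of_measurable_coe _ fun t ht => ?_
  simp_rw [Measure.map_apply measurable_prodMk_left ht]
  exact measurable_measure_prodMk_left ht

lemma prod_eq_bind (μ : Measure α) [SFinite μ] (ν : Measure β) [SFinite ν] :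
    μ.prod ν = μ.bind (fun x => ν.map (Prod.mk x)) := by
  ext s hs
  rw [Measure.prod_apply hs, Measure.bind_apply hs (measurable_map_prod_mk ν).aemeasurable]
  exact lintegral_congr fun a => (Measure.map_apply measurable_prodMk_left hs).symm

lemma compProd_eq_bind (μ : Measure α) [SFinite μ] (κ : Kernel α β) [IsSFiniteKernel κ] :
    μ.compProd κ = μ.bind (fun a => (κ a).map (Prod.mk a)) := by
  have hm : Measurable fun a => (κ a).map (Prod.mk a) := by
    refine Measure.measurable_of_measurable_coe _ fun t ht => ?_
    simp_rw [Measure.map_apply measurable_prodMk_left ht]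
    exact Kernel.measurable_kernel_prodMk_left ht
  ext s hs
  rw [Measure.compProd_apply hs, Measure.bind_apply hs hm.aemeasurable]
  exact lintegral_congr fun a => (Measure.map_apply measurable_prodMk_left hs).symm

lemma prod_bind (μ : Measure α) [SFinite μ] (ν : Measure β) [SFinite ν]
    {g : α × β → Measure γ} (hg : Measurable g) :
    (μ.prod ν).bind g = μ.bind (fun x => ν.bind (fun y => g (x, y))) := by
  rw [prod_eq_bind, Measure.bind_bind (measurable_map_prod_mk ν).aemeasurable hg.aemeasurable]
  refine congrArg _ (funext fun x => ?_)
  rw [bind_map ν measurable_prodMk_left hg]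
  rfl

lemma bind_comm (μ : Measure α) [SFinite μ] (ν : Measure β) [SFinite ν]
    {f : α → β → Measure γ} (hf : Measurable (Function.uncurry f)) :
    μ.bind (fun x => ν.bind (f x)) = ν.bind (fun y => μ.bind (fun x => f x y)) := by
  have hswap : Measurable fun p : β × α => f p.2 p.1 := hf.comp measurable_swap
  have h1 : (μ.prod ν).bind (Function.uncurry f) = μ.bind (fun x => ν.bind (f x)) :=
    prod_bind μ ν hf
  have h2 : (μ.prod ν).bind (Function.uncurry f) = (ν.prod μ).bind (fun p => f p.2 p.1) := by
    rw [← Measure.prod_swap, bind_map _ measurable_swap hf]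
    exact congrArg _ (funext fun p => rfl)
  rw [← h1, h2, prod_bind ν μ hswap]


lemma measurable_map_prod_mk_kernel (κ : Kernel α β) [IsSFiniteKernel κ] :
    Measurable fun a => (κ a).map (Prod.mk a) := by
  refine Measure.measurable_of_measurable_coe _ fun t ht => ?_
  simp_rw [Measure.map_apply measurable_prodMk_left ht]
  exact Kernel.measurable_kernel_prodMk_left ht

end AugAux

/-- For an augmented kernel `K` (the `Q`-augmentation of `K̇`):
`μK = μ` implies `μ* K̇ = μ*` for the `T`-marginal `μ*` of `μ`; conversely
`μ̇ K̇ = μ̇` implies `μK = μ` for `μ(dθ,dy) = μ̇(dθ) Q_θ(dy)`; and the same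
implications hold with invariance replaced by reversibility. -/
theorem augmented_kernel_invariant_reversible
    {T Y : Type*} [MeasurableSpace T] [MeasurableSpace Y]
    (Kd : Kernel T T) [IsMarkovKernel Kd]
    (Q : Kernel T Y) [IsMarkovKernel Q]
    (K : Kernel (T × Y) (T × Y)) [IsMarkovKernel K]
    (hK : ∀ p : T × Y,
      K p = (Kd p.1).bind (fun θ' => (Q θ').map (fun y' => (θ', y')))) :
    (∀ μ : Measure (T × Y), IsProbabilityMeasure μ →
      Invariant μ K → Invariant (μ.map Prod.fst) Kd) ∧
    (∀ μdot : Measure T, IsProbabilityMeasure μdot →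
      Invariant μdot Kd →
      Invariant (μdot.bind (fun θ => (Q θ).map (fun y => (θ, y)))) K) ∧
    (∀ μ : Measure (T × Y), IsProbabilityMeasure μ →
      Reversible μ K → Reversible (μ.map Prod.fst) Kd) ∧
    (∀ μdot : Measure T, IsProbabilityMeasure μdot →
      Reversible μdot Kd →
      Reversible (μdot.bind (fun θ => (Q θ).map (fun y => (θ, y)))) K) := by
    classical
  set J : Kernel T (T × Y) := (Kernel.id : Kernel T T) ×ₖ Q with hJdef
  haveI hJmk : IsMarkovKernel J := by rw [hJdef]; infer_instance
  have hJ : ∀ θ : T, (Q θ).map (fun y => (θ, y)) = J θ := by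
    intro θ
    rw [hJdef, Kernel.prod_apply, Kernel.id_apply, Measure.dirac_prod]
  have hfst : ∀ p : T × Y, (K p).map Prod.fst = Kd p.1 := by
    intro p
    rw [hK p]
    simp only [hJ]
    rw [AugAux.map_bind _ J.measurable measurable_fst]
    have hd : ∀ θ' : T, (J θ').map Prod.fst = Measure.dirac θ' := by
      intro θ'
      rw [← hJ θ', Measure.map_map measurable_fst measurable_prodMk_left]
      have he : (Prod.fst ∘ fun y : Y => (θ', y)) = fun _ => θ' := rfl
      rw [he, Measure.map_const, measure_univ, one_smul]
    simp_rw [hd]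
    exact Measure.bind_dirac
  refine ⟨?_, ?_, ?_, ?_⟩
  · -- invariance: joint → marginal
    intro μ hμP hinv
    unfold Invariant at *
    have hm : μ.map Prod.fst = μ.bind (fun p => Kd p.1) := by
      have h1 : μ.map Prod.fst = (μ.bind (fun x => K x)).map Prod.fst := by rw [hinv]
      rw [AugAux.map_bind μ K.measurable measurable_fst] at h1
      simp_rw [hfst] at h1
      exact h1
    calc (μ.map Prod.fst).bind (fun x => Kd x)
        = μ.bind (fun p => Kd p.1) := by
          rw [AugAux.bind_map μ measurable_fst Kd.measurable]; rfl
      _ = μ.map Prod.fst := hm.symm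
  · -- invariance: marginal → joint
    intro μdot hP hinv
    unfold Invariant at *
    simp only [hJ]
    rw [Measure.bind_bind J.measurable.aemeasurable K.measurable.aemeasurable]
    have step : ∀ θ : T, (J θ).bind (fun x => K x) = (Kd θ).bind (fun θ' => J θ') := by
      intro θ
      rw [← hJ θ, AugAux.bind_map (Q θ) measurable_prodMk_left K.measurable]
      have he : ((fun x => K x) ∘ Prod.mk θ) = fun _ : Y => (Kd θ).bind (fun θ' => J θ') := by
        funext y
        show K (θ, y) = _
        rw [hK (θ, y)]
        simp only [hJ]
      rw [he, Measure.bind_const, measure_univ, one_smul]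
    simp_rw [step]
    rw [← Measure.bind_bind Kd.measurable.aemeasurable J.measurable.aemeasurable, hinv]
  · -- reversibility: joint → marginal
    intro μ hμP hrev
    unfold Reversible at *
    haveI : IsProbabilityMeasure (μ.map Prod.fst) :=
      Measure.isProbabilityMeasure_map measurable_fst.aemeasurable
    have hA : (μ.map Prod.fst).compProd Kd = (μ.compProd K).map (Prod.map Prod.fst Prod.fst) := by
      rw [AugAux.compProd_eq_bind, AugAux.compProd_eq_bind,
          AugAux.map_bind μ (AugAux.measurable_map_prod_mk_kernel K)
            (measurable_fst.prodMap measurable_fst),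
          AugAux.bind_map μ measurable_fst (AugAux.measurable_map_prod_mk_kernel Kd)]
      refine congrArg _ (funext fun p => ?_)
      show (Kd p.1).map (Prod.mk p.1) = _
      rw [← hfst p, Measure.map_map measurable_prodMk_left measurable_fst,
          Measure.map_map (measurable_fst.prodMap measurable_fst) measurable_prodMk_left]
      rfl
    rw [hA]
    conv_rhs => rw [Measure.map_map measurable_swap (measurable_fst.prodMap measurable_fst)]
    rw [show (Prod.swap ∘ Prod.map (Prod.fst : T × Y → T) (Prod.fst : T × Y → T))
          = Prod.map Prod.fst Prod.fst ∘ Prod.swap from rfl,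
        ← Measure.map_map (measurable_fst.prodMap measurable_fst) measurable_swap, ← hrev]
  · -- reversibility: marginal → joint
    intro μdot hP hrev
    unfold Reversible at *
    simp only [hJ]
    set μ := μdot.bind (fun θ => J θ) with hμdef
    haveI hμP : IsProbabilityMeasure μ := by
      constructor
      rw [hμdef, Measure.bind_apply MeasurableSet.univ J.measurable.aemeasurable]
      simp [measure_univ]
    set F : Kernel (T × T) ((T × Y) × (T × Y)) :=
      (J.comap Prod.fst measurable_fst) ×ₖ (J.comap Prod.snd measurable_snd) with hFdef
    haveI hFmk : IsMarkovKernel F := by rw [hFdef]; infer_instance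
    have hF : ∀ q : T × T, F q = (J q.1).prod (J q.2) := by
      intro q; rw [hFdef, Kernel.prod_apply, Kernel.comap_apply, Kernel.comap_apply]
    have hFswap : ∀ q : T × T, (F q).map Prod.swap = F q.swap := by
      intro q; rw [hF q, hF q.swap, Measure.prod_swap]; rfl
    have hinner : ∀ θ : T, (J θ).bind (fun p => (K p).map (Prod.mk p))
        = (Kd θ).bind (fun θ' => F (θ, θ')) := by
      intro θ
      have hmeas_unc :
          Measurable (Function.uncurry fun (y : Y) (θ' : T) => (J θ').map (Prod.mk (θ, y))) := by
        have he : (Function.uncurry fun (y : Y) (θ' : T) => (J θ').map (Prod.mk (θ, y)))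
            = fun p : Y × T =>
              ((Kernel.deterministic (fun p : Y × T => (θ, p.1))
                  (measurable_const.prodMk measurable_fst))
                ×ₖ (J.comap Prod.snd measurable_snd)) p := by
          funext p
          simp only [Function.uncurry]
          simp only [Kernel.prod_apply, Kernel.deterministic_apply, Kernel.comap_apply,
            Measure.dirac_prod]
        rw [he]
        exact Kernel.measurable _
      rw [← hJ θ, AugAux.bind_map (Q θ) measurable_prodMk_left
        (AugAux.measurable_map_prod_mk_kernel K)]
      have e1 : ((fun p : T × Y => (K p).map (Prod.mk p)) ∘ Prod.mk θ)
          = fun y => (Kd θ).bind (fun θ' => (J θ').map (Prod.mk (θ, y))) := by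
        funext y
        show (K (θ, y)).map (Prod.mk (θ, y)) = _
        rw [hK (θ, y)]
        simp only [hJ]
        rw [AugAux.map_bind (Kd θ) J.measurable measurable_prodMk_left]
      rw [e1, AugAux.bind_comm (Q θ) (Kd θ) hmeas_unc]
      refine congrArg _ (funext fun θ' => ?_)
      rw [hF (θ, θ'), AugAux.prod_eq_bind (J θ) (J θ'), ← hJ θ,
          AugAux.bind_map (Q θ) measurable_prodMk_left (AugAux.measurable_map_prod_mk (J θ'))]
      rfl
    have hB : μ.compProd K = (μdot.compProd Kd).bind (fun q => F q) := by
      rw [AugAux.compProd_eq_bind μ K, hμdef,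
          Measure.bind_bind J.measurable.aemeasurable (AugAux.measurable_map_prod_mk_kernel K).aemeasurable,
          AugAux.compProd_eq_bind μdot Kd,
          Measure.bind_bind (AugAux.measurable_map_prod_mk_kernel Kd).aemeasurable F.measurable.aemeasurable]
      refine congrArg _ (funext fun θ => ?_)
      rw [hinner θ, AugAux.bind_map (Kd θ) measurable_prodMk_left F.measurable]
      rfl
    rw [hB, AugAux.map_bind _ F.measurable measurable_swap]
    have he : (fun q => (F q).map Prod.swap) = (fun q => F q) ∘ Prod.swap := by
      funext q; rw [hFswap q]; rfl
    rw [he, ← AugAux.bind_map (μdot.compProd Kd) measurable_swap F.measurable, ← hrev]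
end

section
/- An augmented kernel K (the Q-augmentation of K̇) is a positive operator on L²(μ) if and only if K̇ is a positive operator on L²(μ̇). -/
open MeasureTheory ProbabilityTheory Filter
open scoped ENNReal

section Aux
variable {T Y : Type*} [MeasurableSpace T] [MeasurableSpace Y]

lemma aux_map_prod_mk_eq_kernel (Q : Kernel T Y) [IsSFiniteKernel Q] :
    (fun θ => (Q θ).map (fun y => (θ, y))) = ⇑(Kernel.id ⊗ₖ Kernel.prodMkLeft T Q) := by
  funext θ
  ext s hs
  rw [Measure.map_apply measurable_prodMk_left hs, Kernel.compProd_apply hs]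
  rw [Kernel.id_apply]
  rw [show (fun b => ((Kernel.prodMkLeft T Q) (θ, b)) (Prod.mk b ⁻¹' s))
        = fun b => Q b (Prod.mk b ⁻¹' s) from rfl]
  rw [lintegral_dirac' _ (Kernel.measurable_kernel_prodMk_left hs)]

lemma bind_map_eq_compProd (ν : Measure T) [SFinite ν] (Q : Kernel T Y) [IsSFiniteKernel Q] :
    ν.bind (fun θ => (Q θ).map (fun y => (θ, y))) = ν ⊗ₘ Q := by
  ext s hs
  rw [Measure.bind_apply hs (by rw [aux_map_prod_mk_eq_kernel Q]; exact (Kernel.measurable _).aemeasurable),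
      Measure.compProd_apply hs]
  refine lintegral_congr fun θ => ?_
  rw [Measure.map_apply measurable_prodMk_left hs]

lemma aux_compProd_left_eq_kernel (Kd : Kernel T T) [IsSFiniteKernel Kd] (Q : Kernel T Y)
    [IsSFiniteKernel Q] :
    (fun θ => (Kd θ) ⊗ₘ Q) = ⇑(Kd ⊗ₖ Kernel.prodMkLeft T Q) := by
  funext θ; ext s hs
  rw [Measure.compProd_apply hs, Kernel.compProd_apply hs]
  rfl

end Aux

section Aux2
variable {Z : Type*} [MeasurableSpace Z]

lemma kOp_integral_congr {ν : Measure Z} {κ : Kernel Z Z}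
    (hinv : ν.bind ⇑κ = ν) {u v : Z → ℝ} (huv : u =ᵐ[ν] v) :
    ∫ z, u z * kOp κ u z ∂ν = ∫ z, v z * kOp κ v z ∂ν := by
  have h0 : ν {z | ¬ u z = v z} = 0 := ae_iff.1 huv
  obtain ⟨N, hNsub, hNm, hN0⟩ := exists_measurable_superset_of_null h0
  have hlz : ∫⁻ z, κ z N ∂ν = 0 := by
    rw [← Measure.bind_apply hNm (Kernel.measurable κ).aemeasurable, hinv, hN0]
  have haeK : ∀ᵐ z ∂ν, κ z N = 0 := by
    have := (lintegral_eq_zero_iff (Kernel.measurable_coe κ hNm)).1 hlz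
    filter_upwards [this] with z hz using hz
  have hkop : ∀ᵐ z ∂ν, kOp κ u z = kOp κ v z := by
    filter_upwards [haeK] with z hz
    refine integral_congr_ae ?_
    have : (κ z) {w | ¬ u w = v w} = 0 := measure_mono_null hNsub hz
    exact ae_iff.2 this
  refine integral_congr_ae ?_
  filter_upwards [huv, hkop] with z h1 h2
  rw [h1, h2]

lemma jensen_sq (ν : Measure Z) [IsProbabilityMeasure ν]
    {g : Z → ℝ≥0∞} (hg : AEMeasurable g ν) :
    (∫⁻ z, g z ∂ν) ^ (2:ℝ) ≤ ∫⁻ z, g z ^ (2:ℝ) ∂ν := by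
  have hpq : Real.HolderConjugate 2 2 := Real.HolderConjugate.two_two
  have h := ENNReal.lintegral_mul_le_Lp_mul_Lq ν hpq hg aemeasurable_const (g := fun _ => 1)
  simp only [mul_one, Pi.mul_apply] at h
  have h1 : (∫⁻ _ : Z, (1:ℝ≥0∞) ^ (2:ℝ) ∂ν) ^ (1/(2:ℝ)) = 1 := by simp
  rw [h1, mul_one] at h
  calc (∫⁻ z, g z ∂ν) ^ (2:ℝ)
      ≤ ((∫⁻ z, g z ^ (2:ℝ) ∂ν) ^ (1/(2:ℝ))) ^ (2:ℝ) :=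
        ENNReal.rpow_le_rpow h (by norm_num)
    _ = ∫⁻ z, g z ^ (2:ℝ) ∂ν := by
        rw [← ENNReal.rpow_mul]; norm_num

lemma integrable_mul_L2 {ν : Measure Z} {u v : Z → ℝ}
    (hu : MemLp u 2 ν) (hv : MemLp v 2 ν) :
    Integrable (fun z => u z * v z) ν := by
  refine Integrable.mono' ((hu.integrable_sq.add hv.integrable_sq).div_const 2)
    (hu.1.mul hv.1) ?_
  filter_upwards with z
  have h1 : 2 * |u z| * |v z| ≤ |u z|^2 + |v z|^2 := two_mul_le_add_sq _ _
  have h2 : |u z * v z| = |u z| * |v z| := abs_mul _ _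
  simp only [Real.norm_eq_abs, Pi.add_apply]
  rw [h2]
  nlinarith [sq_abs (u z), sq_abs (v z)]

lemma memℒp_two_iff_lintegral {ν : Measure Z} {g : Z → ℝ} (hsm : AEStronglyMeasurable g ν) :
    MemLp g 2 ν ↔ ∫⁻ z, (‖g z‖₊ : ℝ≥0∞) ^ (2:ℝ) ∂ν < ⊤ := by
  rw [MemLp, eLpNorm_eq_lintegral_rpow_enorm_toReal two_ne_zero ENNReal.ofNat_ne_top]
  simp only [ENNReal.toReal_ofNat]
  rw [ENNReal.rpow_lt_top_iff_of_pos (by norm_num : (0:ℝ) < 1/2)]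
  exact ⟨fun h => h.2, fun h => ⟨hsm, h⟩⟩

lemma lintegral_sq_kOp_le {ν : Measure Z} {κ : Kernel Z Z} [IsMarkovKernel κ]
    (hinv : ν.bind ⇑κ = ν) {u : Z → ℝ} (hu_sm : StronglyMeasurable u) :
    ∫⁻ z, (‖kOp κ u z‖₊ : ℝ≥0∞) ^ (2:ℝ) ∂ν ≤ ∫⁻ z, (‖u z‖₊ : ℝ≥0∞) ^ (2:ℝ) ∂ν := by
  have hmeas : Measurable fun w => (‖u w‖₊ : ℝ≥0∞) := hu_sm.measurable.nnnorm.coe_nnreal_ennreal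
  calc ∫⁻ z, (‖kOp κ u z‖₊ : ℝ≥0∞) ^ (2:ℝ) ∂ν
      ≤ ∫⁻ z, (∫⁻ w, ‖u w‖₊ ∂(κ z)) ^ (2:ℝ) ∂ν := by
        refine lintegral_mono fun z => ?_
        exact ENNReal.rpow_le_rpow (enorm_integral_le_lintegral_enorm _) (by norm_num)
    _ ≤ ∫⁻ z, ∫⁻ w, (‖u w‖₊ : ℝ≥0∞) ^ (2:ℝ) ∂(κ z) ∂ν :=
        lintegral_mono fun z => jensen_sq (κ z) hmeas.aemeasurable
    _ = ∫⁻ w, (‖u w‖₊ : ℝ≥0∞) ^ (2:ℝ) ∂(ν.bind ⇑κ) :=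
        (Measure.lintegral_bind (Kernel.measurable κ).aemeasurable (hmeas.pow_const _).aemeasurable).symm
    _ = _ := by rw [hinv]

lemma memℒp_two_kOp {ν : Measure Z} {κ : Kernel Z Z} [IsMarkovKernel κ]
    (hinv : ν.bind ⇑κ = ν) {u : Z → ℝ} (hu_sm : StronglyMeasurable u) (hu : MemLp u 2 ν) :
    MemLp (kOp κ u) 2 ν := by
  have hsm : StronglyMeasurable (kOp κ u) := by
    have h := (hu_sm.comp_measurable
      (measurable_snd : Measurable (Prod.snd : Z × Z → Z))).integral_kernel_prod_right' (κ := κ)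
    exact h
  rw [memℒp_two_iff_lintegral hsm.aestronglyMeasurable]
  exact lt_of_le_of_lt (lintegral_sq_kOp_le hinv hu_sm)
    ((memℒp_two_iff_lintegral hu.1).1 hu)

end Aux2

section MainAux
variable {T Y : Type*} [MeasurableSpace T] [MeasurableSpace Y]

lemma invariant_of_reversible (μd : Measure T) [IsProbabilityMeasure μd]
    (Kd : Kernel T T) [IsMarkovKernel Kd]
    (hrev : μd.compProd Kd = (μd.compProd Kd).map Prod.swap) :
    μd.bind ⇑Kd = μd := by
  ext s hs
  rw [Measure.bind_apply hs (Kernel.measurable Kd).aemeasurable]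
  have h1 : (μd ⊗ₘ Kd) (Set.univ ×ˢ s) = ∫⁻ θ, Kd θ s ∂μd := by
    rw [Measure.compProd_apply_prod MeasurableSet.univ hs, Measure.restrict_univ]
  have h2 : (μd ⊗ₘ Kd) (s ×ˢ Set.univ) = μd s := by
    rw [Measure.compProd_apply_prod hs MeasurableSet.univ]
    simp
  have h3 : (μd ⊗ₘ Kd) (Set.univ ×ˢ s) = (μd ⊗ₘ Kd) (s ×ˢ Set.univ) := by
    conv_lhs => rw [hrev]
    rw [Measure.map_apply measurable_swap (MeasurableSet.univ.prod hs), Set.preimage_swap_prod]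
  rw [← h1, h3, h2]

lemma bind_compProd_eq (μd : Measure T) [IsProbabilityMeasure μd]
    (Kd : Kernel T T) [IsMarkovKernel Kd] (Q : Kernel T Y) [IsMarkovKernel Q]
    (hinv : μd.bind ⇑Kd = μd) :
    μd.bind (fun θ => (Kd θ) ⊗ₘ Q) = μd ⊗ₘ Q := by
  have hm : Measurable (fun θ => (Q θ).map (fun y => (θ, y))) := by
    rw [aux_map_prod_mk_eq_kernel Q]; exact Kernel.measurable _
  have h1 : (fun θ => (Kd θ) ⊗ₘ Q)
      = fun θ => (Kd θ).bind (fun θ' => (Q θ').map (fun y => (θ', y))) := by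
    funext θ; rw [bind_map_eq_compProd]
  rw [h1, ← Measure.bind_bind (Kernel.measurable Kd).aemeasurable hm.aemeasurable, hinv, bind_map_eq_compProd]

lemma core_identity (μd : Measure T) [IsProbabilityMeasure μd]
    (Kd : Kernel T T) [IsMarkovKernel Kd] (Q : Kernel T Y) [IsMarkovKernel Q]
    (hinv : μd.bind ⇑Kd = μd)
    (K : Kernel (T × Y) (T × Y)) [IsMarkovKernel K]
    (hK : ∀ p : T × Y, K p = (Kd p.1).bind (fun θ' => (Q θ').map (fun y' => (θ', y'))))
    {f : T × Y → ℝ} (hf_sm : StronglyMeasurable f) (hf2 : MemLp f 2 (μd ⊗ₘ Q)) :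
    MemLp (fun θ => ∫ y, f (θ, y) ∂Q θ) 2 μd ∧
      ∫ p, f p * kOp K f p ∂(μd ⊗ₘ Q)
        = ∫ θ, (∫ y, f (θ, y) ∂Q θ) * kOp Kd (fun θ' => ∫ y, f (θ', y) ∂Q θ') θ ∂μd := by
  set P := fun θ => ∫ y, f (θ, y) ∂Q θ with hP
  have hP_sm : StronglyMeasurable P := hf_sm.integral_kernel_prod_right' (κ := Q)
  have hfmeas : Measurable fun p => (‖f p‖₊ : ℝ≥0∞) := hf_sm.measurable.nnnorm.coe_nnreal_ennreal
  have hPmem : MemLp P 2 μd := by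
    rw [memℒp_two_iff_lintegral hP_sm.aestronglyMeasurable]
    have hb : ∫⁻ θ, (‖P θ‖₊:ℝ≥0∞) ^ (2:ℝ) ∂μd
        ≤ ∫⁻ p, (‖f p‖₊:ℝ≥0∞) ^ (2:ℝ) ∂(μd ⊗ₘ Q) := by
      rw [Measure.lintegral_compProd (hfmeas.pow_const _)]
      refine lintegral_mono fun θ => ?_
      calc (‖P θ‖₊:ℝ≥0∞) ^ (2:ℝ)
          ≤ (∫⁻ y, ‖f (θ, y)‖₊ ∂Q θ) ^ (2:ℝ) :=
            ENNReal.rpow_le_rpow (enorm_integral_le_lintegral_enorm _) (by norm_num)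
        _ ≤ ∫⁻ y, (‖f (θ, y)‖₊:ℝ≥0∞) ^ (2:ℝ) ∂Q θ :=
            jensen_sq (Q θ) (hfmeas.comp measurable_prodMk_left).aemeasurable
    exact lt_of_le_of_lt hb ((memℒp_two_iff_lintegral hf2.1).1 hf2)
  refine ⟨hPmem, ?_⟩
  have hKp : ∀ p : T × Y, K p = (Kd p.1) ⊗ₘ Q := fun p => by
    rw [hK p, bind_map_eq_compProd]
  have hfint : Integrable f (μd ⊗ₘ Q) := hf2.integrable one_le_two
  have hmeasKQ : Measurable (fun θ => (Kd θ) ⊗ₘ Q) := by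
    rw [aux_compProd_left_eq_kernel Kd Q]; exact Kernel.measurable _
  have hbindKQ : μd.bind (fun θ => (Kd θ) ⊗ₘ Q) = μd ⊗ₘ Q := bind_compProd_eq μd Kd Q hinv
  have haecp : ∀ᵐ θ ∂μd, Integrable f ((Kd θ) ⊗ₘ Q) := by
    have hlt : ∫⁻ θ, ∫⁻ p, ‖f p‖₊ ∂((Kd θ) ⊗ₘ Q) ∂μd < ⊤ := by
      rw [← Measure.lintegral_bind hmeasKQ.aemeasurable hfmeas.aemeasurable, hbindKQ]
      exact hfint.2
    have hmeas2 : Measurable fun θ => ∫⁻ p, ‖f p‖₊ ∂((Kd θ) ⊗ₘ Q) :=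
      (Measure.measurable_lintegral hfmeas).comp hmeasKQ
    filter_upwards [ae_lt_top hmeas2 hlt.ne] with θ hθ
    exact ⟨hf_sm.aestronglyMeasurable, hθ⟩
  set G := fun θ => ∫ p, f p ∂((Kd θ) ⊗ₘ Q) with hG
  have hkop : ∀ p : T × Y, kOp K f p = G p.1 := fun p => by
    simp only [kOp, hKp p, hG]
  have hGae : G =ᵐ[μd] kOp Kd P := by
    filter_upwards [haecp] with θ hθ
    show (∫ p, f p ∂((Kd θ) ⊗ₘ Q)) = kOp Kd P θ
    rw [Measure.integral_compProd hθ]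
    rfl
  have hkP : MemLp (kOp Kd P) 2 μd := memℒp_two_kOp hinv hP_sm hPmem
  have hGmem : MemLp G 2 μd := hkP.ae_eq hGae.symm
  have hGfst : MemLp (fun p : T × Y => G p.1) 2 (μd ⊗ₘ Q) := by
    have hmap : (μd ⊗ₘ Q).map Prod.fst = μd := Measure.fst_compProd μd Q
    have h := (memLp_map_measure_iff (f := (Prod.fst : T × Y → T)) (g := G)
      (by rw [hmap]; exact hGmem.1) measurable_fst.aemeasurable).1 (by rw [hmap]; exact hGmem)
    exact h
  have hint : Integrable (fun p => f p * G p.1) (μd ⊗ₘ Q) := integrable_mul_L2 hf2 hGfst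
  calc ∫ p, f p * kOp K f p ∂(μd ⊗ₘ Q)
      = ∫ p, f p * G p.1 ∂(μd ⊗ₘ Q) := by
        refine integral_congr_ae (Filter.Eventually.of_forall fun p => ?_)
        show f p * kOp K f p = f p * G p.1
        rw [hkop p]
    _ = ∫ θ, ∫ y, f (θ, y) * G θ ∂Q θ ∂μd := Measure.integral_compProd hint
    _ = ∫ θ, P θ * G θ ∂μd := by
        refine integral_congr_ae (Filter.Eventually.of_forall fun θ => ?_)
        show (∫ y, f (θ, y) * G θ ∂Q θ) = P θ * G θ
        rw [integral_mul_const]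
    _ = ∫ θ, P θ * kOp Kd P θ ∂μd := by
        refine integral_congr_ae ?_
        filter_upwards [hGae] with θ hθ
        rw [hθ]

end MainAux

/-- An augmented kernel `K` (the `Q`-augmentation of `K̇`) is a
positive operator on `L²(μ)` iff `K̇` is a positive operator on `L²(μ̇)`. -/
theorem augmented_kernel_positive_iff
    {T Y : Type*} [MeasurableSpace T] [MeasurableSpace Y]
    (μd : Measure T) [IsProbabilityMeasure μd]
    (Kd : Kernel T T) [IsMarkovKernel Kd]
    (Q : Kernel T Y) [IsMarkovKernel Q]
    (hrev : Reversible μd Kd)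
    (K : Kernel (T × Y) (T × Y)) [IsMarkovKernel K]
    (hK : ∀ p : T × Y,
      K p = (Kd p.1).bind (fun θ' => (Q θ').map (fun y' => (θ', y'))))
    (μ : Measure (T × Y))
    (hμ : μ = μd.bind (fun θ => (Q θ).map (fun y => (θ, y)))) :
    (∀ f : T × Y → ℝ, MemLp f 2 μ → 0 ≤ ∫ p, f p * kOp K f p ∂μ) ↔
      (∀ g : T → ℝ, MemLp g 2 μd → 0 ≤ ∫ θ, g θ * kOp Kd g θ ∂μd) := by
  have hν : μ = μd ⊗ₘ Q := by rw [hμ, bind_map_eq_compProd]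
  have hinv : μd.bind ⇑Kd = μd := invariant_of_reversible μd Kd hrev
  have hKp : ∀ p : T × Y, K p = (Kd p.1) ⊗ₘ Q := fun p => by
    rw [hK p, bind_map_eq_compProd]
  have hmeasKQ : Measurable (fun θ => (Kd θ) ⊗ₘ Q) := by
    rw [aux_compProd_left_eq_kernel Kd Q]; exact Kernel.measurable _
  have hmap : (μd ⊗ₘ Q).map Prod.fst = μd := Measure.fst_compProd μd Q
  have hKinv : μ.bind ⇑K = μ := by
    have hstep : μ.bind ⇑K = μd.bind (fun θ => (Kd θ) ⊗ₘ Q) := by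
      ext s hs
      rw [Measure.bind_apply hs (Kernel.measurable K).aemeasurable, Measure.bind_apply hs hmeasKQ.aemeasurable]
      calc ∫⁻ p, K p s ∂μ
          = ∫⁻ p, ((Kd p.1) ⊗ₘ Q) s ∂μ := lintegral_congr fun p => by rw [hKp p]
        _ = ∫⁻ θ, ((Kd θ) ⊗ₘ Q) s ∂(μ.map Prod.fst) :=
            (lintegral_map ((Measure.measurable_coe hs).comp hmeasKQ) measurable_fst).symm
        _ = ∫⁻ θ, ((Kd θ) ⊗ₘ Q) s ∂μd := by rw [hν, hmap]
    rw [hstep, bind_compProd_eq μd Kd Q hinv, ← hν]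
  constructor
  · intro hpos g hg
    obtain ⟨g₀, hg₀_sm, hgg₀⟩ := hg.1
    have hg₀ : MemLp g₀ 2 μd := hg.ae_eq hgg₀
    set f := fun p : T × Y => g₀ p.1 with hf
    have hf_sm : StronglyMeasurable f := hg₀_sm.comp_measurable measurable_fst
    have hf2 : MemLp f 2 (μd ⊗ₘ Q) :=
      (memLp_map_measure_iff (f := (Prod.fst : T × Y → T)) (g := g₀)
        (by rw [hmap]; exact hg₀_sm.aestronglyMeasurable) measurable_fst.aemeasurable).1
        (by rw [hmap]; exact hg₀)
    obtain ⟨hPmem, hid⟩ := core_identity μd Kd Q hinv K hK hf_sm hf2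
    have hPg2 : ∀ θ, (∫ y, f (θ, y) ∂Q θ) = g₀ θ := fun θ => by simp [hf]
    simp only [hPg2] at hid
    have h1 : ∫ θ, g θ * kOp Kd g θ ∂μd = ∫ θ, g₀ θ * kOp Kd g₀ θ ∂μd :=
      kOp_integral_congr hinv hgg₀
    rw [h1, ← hid]
    have := hpos f (by rw [hν]; exact hf2)
    rwa [hν] at this
  · intro hpos f hf
    obtain ⟨f₀, hf₀_sm, hff₀⟩ := hf.1
    have hf₀ : MemLp f₀ 2 μ := hf.ae_eq hff₀
    obtain ⟨hPmem, hid⟩ := core_identity μd Kd Q hinv K hK hf₀_sm (by rw [← hν]; exact hf₀)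
    have h1 : ∫ p, f p * kOp K f p ∂μ = ∫ p, f₀ p * kOp K f₀ p ∂μ :=
      kOp_integral_congr hKinv hff₀
    rw [h1, hν, hid]
    exact hpos _ hPmem
end

section
/- Jump chain kernel and reversibility: let K be a μ-invariant Markov kernel on T with acceptance probability α(θ) := K(θ, T∖{θ}) > 0 everywhere. Then the jump kernel K̃(θ,A) := K(θ, A∖{θ})/α(θ) is a Markov kernel which is invariant for the probability μ̃(dθ) := α(θ)μ(dθ)/μ(α); moreover K is μ-reversible if and only if K̃ is μ̃-reversible. -/
open MeasureTheory ProbabilityTheory Filter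
open scoped ENNReal

section JumpAux
open Set
variable {T : Type*} [MeasurableSpace T] {μ : Measure T}

lemma lintegral_restrict_congr_on {A : Set T} (hA : MeasurableSet A) {f g : T → ℝ≥0∞}
    (h : ∀ x ∈ A, f x = g x) :
    ∫⁻ x, f x ∂(μ.restrict A) = ∫⁻ x, g x ∂(μ.restrict A) := by
  have h0 : (μ.restrict A) Aᶜ = 0 := by
    rw [Measure.restrict_apply hA.compl, compl_inter_self]; simp
  exact lintegral_congr_ae (ae_iff.2 (measure_mono_null (fun x hx hxA => hx (h x hxA)) h0))

lemma lintegral_split_compl {A : Set T} (hA : MeasurableSet A) (f : T → ℝ≥0∞) :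
    ∫⁻ x, f x ∂μ = ∫⁻ x, f x ∂(μ.restrict A) + ∫⁻ x, f x ∂(μ.restrict Aᶜ) := by
  rw [← lintegral_add_measure, Measure.restrict_add_restrict_compl hA]

lemma lintegral_simpleFunc_withDensity (μ : Measure T) (α : T → ℝ≥0∞)
    (φ : SimpleFunc T ℝ≥0∞) (hfin : ∀ x, φ x ≠ ∞) :
    ∫⁻ x, φ x ∂(μ.withDensity α) = ∫⁻ x, φ x * α x ∂μ := by
  revert hfin
  refine SimpleFunc.induction (motive := fun φ : SimpleFunc T ℝ≥0∞ =>
    (∀ x, φ x ≠ ∞) → ∫⁻ x, φ x ∂(μ.withDensity α) = ∫⁻ x, φ x * α x ∂μ) ?_ ?_ φ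
  · intro c s hs hfin
    by_cases hc : c = ∞
    · have hs0 : s = (∅ : Set T) := by
        ext x
        simp only [mem_empty_iff_false, iff_false]
        intro hx
        exact hfin x (by simp [SimpleFunc.coe_piecewise, Set.piecewise, hx, hc])
      subst hs0
      simp [SimpleFunc.coe_piecewise]
    · have hcoe : ∀ x, (SimpleFunc.piecewise ∅ MeasurableSet.empty
        (SimpleFunc.const T c) (SimpleFunc.const T 0)) x = 0 := by intro x; simp
      have hcoe2 : ∀ x, (SimpleFunc.piecewise s hs
          (SimpleFunc.const T c) (SimpleFunc.const T 0)) x = s.indicator (fun _ => c) x := by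
        intro x
        simp [SimpleFunc.coe_piecewise, Set.piecewise, Set.indicator]
      calc ∫⁻ x, (SimpleFunc.piecewise s hs (SimpleFunc.const T c) (SimpleFunc.const T 0)) x
            ∂(μ.withDensity α)
          = ∫⁻ x, s.indicator (fun _ => c) x ∂(μ.withDensity α) := lintegral_congr hcoe2
        _ = c * (μ.withDensity α) s := lintegral_indicator_const hs c
        _ = c * ∫⁻ x in s, α x ∂μ := by rw [withDensity_apply _ hs]
        _ = ∫⁻ x in s, c * α x ∂μ := (lintegral_const_mul' c _ hc).symm
        _ = ∫⁻ x, s.indicator (fun y => c * α y) x ∂μ := (lintegral_indicator hs _).symm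
        _ = ∫⁻ x, s.indicator (fun _ => c) x * α x ∂μ := by
            refine lintegral_congr fun x => ?_
            by_cases hx : x ∈ s <;> simp [Set.indicator, hx]
        _ = ∫⁻ x, (SimpleFunc.piecewise s hs (SimpleFunc.const T c) (SimpleFunc.const T 0)) x
              * α x ∂μ := by
            refine lintegral_congr fun x => ?_
            rw [hcoe2]
  · intro f g hdisj hf hg hfin
    have hfin_f : ∀ x, f x ≠ ∞ := fun x =>
      ne_top_of_le_ne_top (by simpa [SimpleFunc.coe_add] using hfin x) le_self_add
    have hfin_g : ∀ x, g x ≠ ∞ := fun x =>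
      ne_top_of_le_ne_top (by simpa [SimpleFunc.coe_add] using hfin x) le_add_self
    have hS : MeasurableSet (Function.support f) := f.measurableSet_support
    have hg0 : ∀ x ∈ Function.support f, g x = 0 := fun x hx =>
      Function.notMem_support.mp (Set.disjoint_left.mp hdisj hx)
    have hf0 : ∀ x ∈ (Function.support f)ᶜ, f x = 0 := fun x hx =>
      Function.notMem_support.mp hx
    have key : ∫⁻ x, (f + g : SimpleFunc T ℝ≥0∞) x * α x ∂μ
        = ∫⁻ x, f x * α x ∂μ + ∫⁻ x, g x * α x ∂μ := by
      rw [lintegral_split_compl hS (fun x => (f + g : SimpleFunc T ℝ≥0∞) x * α x),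
          lintegral_split_compl hS (fun x => f x * α x),
          lintegral_split_compl hS (fun x => g x * α x)]
      have e1 : ∫⁻ x, (f + g : SimpleFunc T ℝ≥0∞) x * α x ∂(μ.restrict (Function.support f))
          = ∫⁻ x, f x * α x ∂(μ.restrict (Function.support f)) :=
        lintegral_restrict_congr_on hS fun x hx => by
          simp [SimpleFunc.coe_add, hg0 x hx]
      have e2 : ∫⁻ x, (f + g : SimpleFunc T ℝ≥0∞) x * α x ∂(μ.restrict (Function.support f)ᶜ)
          = ∫⁻ x, g x * α x ∂(μ.restrict (Function.support f)ᶜ) :=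
        lintegral_restrict_congr_on hS.compl fun x hx => by
          simp [SimpleFunc.coe_add, hf0 x hx]
      have e3 : ∫⁻ x, f x * α x ∂(μ.restrict (Function.support f)ᶜ) = 0 := by
        rw [lintegral_restrict_congr_on hS.compl
          (g := fun _ => 0) (fun x hx => by simp [hf0 x hx])]
        simp
      have e4 : ∫⁻ x, g x * α x ∂(μ.restrict (Function.support f)) = 0 := by
        rw [lintegral_restrict_congr_on hS
          (g := fun _ => 0) (fun x hx => by simp [hg0 x hx])]
        simp
      rw [e1, e2, e3, e4, add_zero, zero_add]
    have lhs : ∫⁻ x, (f + g : SimpleFunc T ℝ≥0∞) x ∂(μ.withDensity α)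
        = ∫⁻ x, f x ∂(μ.withDensity α) + ∫⁻ x, g x ∂(μ.withDensity α) := by
      have : ∀ x, (f + g : SimpleFunc T ℝ≥0∞) x = f x + g x := fun x => by
        simp [SimpleFunc.coe_add]
      rw [lintegral_congr this, lintegral_add_left f.measurable]
    rw [lhs, key, hf hfin_f, hg hfin_g]

lemma lintegral_withDensity_le (μ : Measure T) (α : T → ℝ≥0∞)
    {v : T → ℝ≥0∞} (hv : Measurable v) :
    ∫⁻ x, v x ∂(μ.withDensity α) ≤ ∫⁻ x, v x * α x ∂μ := by
  rw [lintegral_eq_iSup_eapprox_lintegral hv]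
  refine iSup_le fun n => ?_
  rw [← SimpleFunc.lintegral_eq_lintegral,
    lintegral_simpleFunc_withDensity μ α _ (fun x => (SimpleFunc.eapprox_lt_top v n x).ne)]
  refine lintegral_mono fun x => mul_le_mul_left ?_ _
  rw [← SimpleFunc.iSup_eapprox_apply hv x]
  exact le_iSup (fun n => (SimpleFunc.eapprox v n) x) n

lemma lintegral_withDensity_of_le_one (μ : Measure T) [IsFiniteMeasure μ] (α : T → ℝ≥0∞)
    (hα1 : ∀ x, α x ≤ 1) {w : T → ℝ≥0∞} (hw : Measurable w) (hw1 : ∀ x, w x ≤ 1) :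
    ∫⁻ x, w x ∂(μ.withDensity α) = ∫⁻ x, w x * α x ∂μ := by
  refine le_antisymm (lintegral_withDensity_le μ α hw) ?_
  set w' : T → ℝ≥0∞ := fun x => 1 - w x with hw'def
  have hw'm : Measurable w' := measurable_const.sub hw
  have hsum : ∀ x, w x + w' x = 1 := fun x => add_tsub_cancel_of_le (hw1 x)
  have hρ_ne : (μ.withDensity α) Set.univ ≠ ∞ := by
    rw [withDensity_apply _ MeasurableSet.univ, Measure.restrict_univ]
    refine ne_top_of_le_ne_top (measure_ne_top μ Set.univ) ?_
    calc ∫⁻ x, α x ∂μ ≤ ∫⁻ _, 1 ∂μ := lintegral_mono hα1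
      _ = μ Set.univ := by simp
  have h2 : ∫⁻ x, w x ∂(μ.withDensity α) + ∫⁻ x, w' x ∂(μ.withDensity α)
      = (μ.withDensity α) Set.univ := by
    rw [← lintegral_add_left hw, lintegral_congr hsum]
    simp
  have h1 : ∫⁻ x, w x * α x ∂μ + ∫⁻ x, w' x * α x ∂μ ≤ (μ.withDensity α) Set.univ := by
    refine (le_lintegral_add _ _).trans (le_of_eq ?_)
    rw [withDensity_apply _ MeasurableSet.univ, Measure.restrict_univ]
    refine lintegral_congr fun x => ?_
    rw [← add_mul, hsum, one_mul]
  have h3 : ∫⁻ x, w' x ∂(μ.withDensity α) ≤ ∫⁻ x, w' x * α x ∂μ :=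
    lintegral_withDensity_le μ α hw'm
  have hfin' : ∫⁻ x, w' x ∂(μ.withDensity α) ≠ ∞ := by
    refine ne_top_of_le_ne_top hρ_ne ?_
    calc ∫⁻ x, w' x ∂(μ.withDensity α) ≤ ∫⁻ _, 1 ∂(μ.withDensity α) :=
          lintegral_mono fun x => tsub_le_self
      _ = (μ.withDensity α) Set.univ := by simp
  refine (ENNReal.add_le_add_iff_right hfin').mp ?_
  calc ∫⁻ x, w x * α x ∂μ + ∫⁻ x, w' x ∂(μ.withDensity α)
      ≤ ∫⁻ x, w x * α x ∂μ + ∫⁻ x, w' x * α x ∂μ := add_le_add le_rfl h3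
    _ ≤ (μ.withDensity α) Set.univ := h1
    _ = ∫⁻ x, w x ∂(μ.withDensity α) + ∫⁻ x, w' x ∂(μ.withDensity α) := h2.symm

lemma swap_rect_char (m : Measure (T × T)) [IsFiniteMeasure m] :
    m = m.map Prod.swap ↔ ∀ A B : Set T, MeasurableSet A → MeasurableSet B →
      m (A ×ˢ B) = m (B ×ˢ A) := by
  constructor
  · intro h A B hA hB
    conv_lhs => rw [h]
    rw [Measure.map_apply measurable_swap (hA.prod hB), preimage_swap_prod]
  · intro h
    haveI : IsFiniteMeasure (m.map Prod.swap) := by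
      constructor
      rw [Measure.map_apply measurable_swap MeasurableSet.univ]
      simpa using measure_lt_top m _
    refine ext_of_generate_finite _ generateFrom_prod.symm isPiSystem_prod ?_ ?_
    · rintro s hs
      simp only [Set.mem_image2, Set.mem_setOf_eq] at hs
      obtain ⟨A, hA, B, hB, rfl⟩ := hs
      rw [Measure.map_apply measurable_swap (hA.prod hB), preimage_swap_prod]
      exact h A B hA hB
    · rw [Measure.map_apply measurable_swap MeasurableSet.univ, Set.preimage_univ]
end JumpAux



/-- **jump chain kernel and reversibility.** Let `K` be a `μ`-invariant
Markov kernel on `T` with everywhere positive acceptance probability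
`α(θ) = K(θ, T∖{θ})`. Then the jump kernel `K̃(θ,A) = K(θ, A∖{θ})/α(θ)` is a Markov
kernel invariant for `μ̃(dθ) = α(θ)μ(dθ)/μ(α)`, and `K` is `μ`-reversible iff `K̃`
is `μ̃`-reversible. -/
theorem jump_chain_kernel
    {T : Type*} [MeasurableSpace T] [MeasurableSingletonClass T]
    (μ : Measure T) [IsProbabilityMeasure μ]
    (K : Kernel T T) [IsMarkovKernel K]
    (hinv : Invariant μ K)
    (hα : ∀ θ : T, 0 < K θ {θ}ᶜ)
    (Kt : Kernel T T)
    (hKt : ∀ θ : T, ∀ A : Set T, MeasurableSet A →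
      Kt θ A = K θ (A \ {θ}) / K θ {θ}ᶜ)
    (μt : Measure T)
    (hμt : μt = (∫⁻ θ, K θ {θ}ᶜ ∂μ)⁻¹ • μ.withDensity (fun θ => K θ {θ}ᶜ)) :
    IsMarkovKernel Kt ∧ Invariant μt Kt ∧
      (Reversible μ K ↔ Reversible μt Kt) := by
  classical
  have hα0 : ∀ θ, K θ {θ}ᶜ ≠ 0 := fun θ => (hα θ).ne'
  have hαtop : ∀ θ, K θ {θ}ᶜ ≠ ∞ := fun θ => measure_ne_top _ _
  have hα1 : ∀ θ, K θ {θ}ᶜ ≤ 1 := fun θ => prob_le_one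
  set α : T → ℝ≥0∞ := fun θ => K θ {θ}ᶜ with hαdef
  set ρ : Measure T := μ.withDensity α with hρdef
  set c : ℝ≥0∞ := ∫⁻ θ, α θ ∂μ with hcdef
  -- Markov kernel
  have hKtM : IsMarkovKernel Kt := by
    refine ⟨fun θ => ⟨?_⟩⟩
    rw [hKt θ Set.univ MeasurableSet.univ,
      show (Set.univ : Set T) \ {θ} = {θ}ᶜ from (Set.compl_eq_univ_diff _).symm]
    exact ENNReal.div_self (hα0 θ) (hαtop θ)
  haveI := hKtM
  have hmul : ∀ θ (B : Set T), MeasurableSet B → Kt θ B * α θ = K θ (B \ {θ}) := by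
    intro θ B hB
    rw [hKt θ B hB]
    exact ENNReal.div_mul_cancel (hα0 θ) (hαtop θ)
  have hρ_univ : ρ Set.univ = c := by
    rw [hρdef, withDensity_apply _ MeasurableSet.univ, Measure.restrict_univ]
  have hc_le : c ≤ 1 := by
    rw [hcdef]
    calc ∫⁻ θ, α θ ∂μ ≤ ∫⁻ _, 1 ∂μ := lintegral_mono hα1
      _ = 1 := by simp
  have hc_ne : c ≠ ∞ := ne_top_of_le_ne_top ENNReal.one_ne_top hc_le
  haveI hρfin : IsFiniteMeasure ρ := ⟨by rw [hρ_univ]; exact hc_le.trans_lt ENNReal.one_lt_top⟩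
  haveI hμtfin : IsFiniteMeasure μt := by
    refine ⟨?_⟩
    rw [hμt, Measure.smul_apply, smul_eq_mul, hρ_univ]
    rcases eq_or_ne c 0 with h0 | h0
    · simp [h0]
    · exact ENNReal.mul_lt_top (ENNReal.inv_lt_top.mpr (pos_iff_ne_zero.mpr h0)) hc_ne.lt_top
  -- key rectangle identity
  have key : ∀ A B : Set T, MeasurableSet A → MeasurableSet B →
      (ρ.compProd Kt) (A ×ˢ B) + μ (A ∩ B) = (μ.compProd K) (A ×ˢ B) + ρ (A ∩ B) := by
    intro A B hA hB
    have hvmeas : Measurable fun θ => Kt θ B := Kt.measurable_coe hB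
    have humeas : Measurable fun θ => K θ B := K.measurable_coe hB
    have hpt : ∀ θ,
        A.indicator (fun θ' => Kt θ' B) θ * α θ + (A ∩ B).indicator 1 θ
          = A.indicator (fun θ' => K θ' B) θ + (A ∩ B).indicator α θ := by
      intro θ
      by_cases hA' : θ ∈ A
      · by_cases hB' : θ ∈ B
        · have hKB : K θ B = K θ (B \ {θ}) + K θ {θ} := by
            conv_lhs => rw [← Set.diff_union_of_subset (Set.singleton_subset_iff.mpr hB')]
            rw [measure_union disjoint_sdiff_self_left (measurableSet_singleton θ)]
          have hone : K θ {θ} + α θ = 1 := prob_add_prob_compl (measurableSet_singleton θ)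
          simp only [Set.indicator_of_mem hA', Set.indicator_of_mem (Set.mem_inter hA' hB'),
            Pi.one_apply, hmul θ B hB, hKB]
          rw [add_assoc, hone]
        · simp only [Set.indicator_of_mem hA',
            Set.indicator_of_notMem (show θ ∉ A ∩ B from fun h => hB' h.2),
            hmul θ B hB, Set.diff_singleton_eq_self hB', add_zero]
      · simp only [Set.indicator_of_notMem hA',
          Set.indicator_of_notMem (show θ ∉ A ∩ B from fun h => hA' h.1), zero_mul,
          zero_add, add_zero]
    have hint := lintegral_congr (μ := μ) hpt
    rw [lintegral_add_right _ (measurable_one.indicator (hA.inter hB)),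
      lintegral_add_left (humeas.indicator hA), lintegral_indicator_one (hA.inter hB),
      lintegral_indicator (hA.inter hB), lintegral_indicator hA] at hint
    have hind_le : ∀ x, A.indicator (fun θ' => Kt θ' B) x ≤ 1 := by
      intro x
      by_cases hx : x ∈ A
      · rw [Set.indicator_of_mem hx]; exact prob_le_one
      · rw [Set.indicator_of_notMem hx]; exact zero_le_one
    have hL3 : ∫⁻ θ, A.indicator (fun θ' => Kt θ' B) θ * α θ ∂μ
        = (ρ.compProd Kt) (A ×ˢ B) := by
      rw [← lintegral_withDensity_of_le_one μ α hα1 (hvmeas.indicator hA) hind_le, ← hρdef,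
        Measure.compProd_apply_prod hA hB, lintegral_indicator hA]
    rw [hL3] at hint
    rw [hint, hρdef, withDensity_apply _ (hA.inter hB), Measure.compProd_apply_prod hA hB]
  -- invariance
  have hbindρ : ∀ B : Set T, MeasurableSet B → ∫⁻ θ, Kt θ B ∂ρ = ρ B := by
    intro B hB
    have hk := key Set.univ B MeasurableSet.univ hB
    rw [Set.univ_inter] at hk
    have hμK : (μ.compProd K) (Set.univ ×ˢ B) = μ B := by
      rw [Measure.compProd_apply_prod MeasurableSet.univ hB, Measure.restrict_univ]
      conv_rhs => rw [← hinv]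
      rw [Measure.bind_apply hB (Kernel.measurable K).aemeasurable]
    rw [hμK, add_comm (μ B) (ρ B)] at hk
    have h2 := (ENNReal.add_left_inj (measure_ne_top μ B)).mp hk
    rw [← h2, Measure.compProd_apply_prod MeasurableSet.univ hB, Measure.restrict_univ]
  have hinvt : Invariant μt Kt := by
    refine Measure.ext fun s hs => ?_
    rw [Measure.bind_apply hs (Kernel.measurable Kt).aemeasurable, hμt, lintegral_smul_measure,
      hbindρ s hs, Measure.smul_apply, smul_eq_mul]
  -- reversibility
  have hmt_rect : ∀ A B : Set T, MeasurableSet A → MeasurableSet B →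
      (μt.compProd Kt) (A ×ˢ B) = c⁻¹ * (ρ.compProd Kt) (A ×ˢ B) := by
    intro A B hA hB
    rw [Measure.compProd_apply_prod hA hB, Measure.compProd_apply_prod hA hB, hμt,
      Measure.restrict_smul, lintegral_smul_measure, smul_eq_mul]
  have hP0 : c = 0 → ∀ A B : Set T, MeasurableSet A → MeasurableSet B →
      (ρ.compProd Kt) (A ×ˢ B) = 0 := by
    intro h0 A B hA hB
    refine le_antisymm ?_ (zero_le)
    calc (ρ.compProd Kt) (A ×ˢ B) ≤ (ρ.compProd Kt) Set.univ :=
          measure_mono (Set.subset_univ _)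
      _ = ρ Set.univ := Measure.compProd_apply_univ
      _ = 0 := by rw [hρ_univ, h0]
  have hiff : ∀ A B : Set T, MeasurableSet A → MeasurableSet B →
      ((μ.compProd K) (A ×ˢ B) = (μ.compProd K) (B ×ˢ A) ↔
        (μt.compProd Kt) (A ×ˢ B) = (μt.compProd Kt) (B ×ˢ A)) := by
    intro A B hA hB
    have k1 := key A B hA hB
    have k2 := key B A hB hA
    rw [Set.inter_comm B A] at k2
    constructor
    · intro h
      have hPQ : (ρ.compProd Kt) (A ×ˢ B) = (ρ.compProd Kt) (B ×ˢ A) := by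
        have h3 : (ρ.compProd Kt) (A ×ˢ B) + μ (A ∩ B)
            = (ρ.compProd Kt) (B ×ˢ A) + μ (A ∩ B) := by rw [k1, h, ← k2]
        exact (ENNReal.add_left_inj (measure_ne_top μ _)).mp h3
      rw [hmt_rect A B hA hB, hmt_rect B A hB hA, hPQ]
    · intro h
      have hPQ : (ρ.compProd Kt) (A ×ˢ B) = (ρ.compProd Kt) (B ×ˢ A) := by
        rcases eq_or_ne c 0 with h0 | h0
        · rw [hP0 h0 A B hA hB, hP0 h0 B A hB hA]
        · have h' : c⁻¹ * (ρ.compProd Kt) (A ×ˢ B) = c⁻¹ * (ρ.compProd Kt) (B ×ˢ A) := by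
            rw [← hmt_rect A B hA hB, ← hmt_rect B A hB hA, h]
          calc (ρ.compProd Kt) (A ×ˢ B)
              = c * (c⁻¹ * (ρ.compProd Kt) (A ×ˢ B)) := by
                rw [← mul_assoc, ENNReal.mul_inv_cancel h0 hc_ne, one_mul]
            _ = c * (c⁻¹ * (ρ.compProd Kt) (B ×ˢ A)) := by rw [h']
            _ = (ρ.compProd Kt) (B ×ˢ A) := by
                rw [← mul_assoc, ENNReal.mul_inv_cancel h0 hc_ne, one_mul]
      have h4 : (μ.compProd K) (A ×ˢ B) + ρ (A ∩ B)
          = (μ.compProd K) (B ×ˢ A) + ρ (A ∩ B) := by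
        rw [← k1, hPQ, k2]
      exact (ENNReal.add_left_inj (measure_ne_top ρ _)).mp h4
  refine ⟨hKtM, hinvt, ?_⟩
  exact (swap_rect_char (μ.compProd K)).trans
    ((forall_congr' fun A => forall_congr' fun B => forall_congr' fun hA =>
      forall_congr' fun hB => hiff A B hA hB).trans (swap_rect_char (μt.compProd Kt)).symm)
end

section
/- Dirichlet form comparison for delayed acceptance: let K be μ-reversible, w = dν/dμ with c̲ ≤ w ≤ ‖w‖_∞ < ∞ μ-a.e., and let K^DA be the DA correction of K, which is ν-reversible. Then for all g ∈ L²(μ): c̲ · E_K(g) ≤ E_{K^DA}(g) ≤ ‖w‖_∞ · E_K(g), where E_K is the Dirichlet form w.r.t. μ and E_{K^DA} the Dirichlet form w.r.t. ν. This follows from the identity E_{K^DA}(g) = (1/2)∫ μ(dx) K_x(dx') min{w(x), w(x')} (g(x)−g(x'))². -/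
open MeasureTheory ProbabilityTheory Filter
open scoped ENNReal

/-- The Dirichlet form of a `m`-reversible kernel `P` written as a double integral:
`(1/2) ∫ m(dx) P(x,dx') (g(x) − g(x'))²`. -/
noncomputable def dir2 {Z : Type*} [MeasurableSpace Z]
    (m : Measure Z) (P : Kernel Z Z) (g : Z → ℝ) : ℝ :=
  (1 / 2) * ∫ x, (∫ x', (g x - g x') ^ 2 ∂(P x)) ∂m

/-- **Dirichlet form comparison for delayed acceptance.**
Let `K` be `μ`-reversible, `w = dν/dμ` with `c̲ ≤ w ≤ C` μ-a.e., and `K^DA` the DA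
correction of `K` (ν-reversible). Then for all `g ∈ L²(μ)`:
`c̲ E_K(g) ≤ E_{K^DA}(g) ≤ C E_K(g)`, via the identity
`E_{K^DA}(g) = (1/2)∫ μ(dx) K_x(dx') min{w(x),w(x')} (g(x)−g(x'))²`. -/
theorem da_dirichlet_comparison
    {X : Type*} [MeasurableSpace X] [MeasurableSingletonClass X]
    (μ ν : Measure X) [IsProbabilityMeasure μ] [IsProbabilityMeasure ν]
    (w : X → ℝ) (hw_meas : Measurable w) (hw_nonneg : 0 ≤ w)
    (hRN : ν = μ.withDensity (fun x => ENNReal.ofReal (w x)))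
    (K : Kernel X X) [IsMarkovKernel K] (hKrev : Reversible μ K)
    (KDA : Kernel X X) [IsMarkovKernel KDA]
    (hKDA : ∀ x : X, ∀ A : Set X, MeasurableSet A →
      KDA x (A \ {x}) =
        ∫⁻ x' in A \ {x}, ENNReal.ofReal (min 1 (w x' / w x)) ∂(K x))
    (hDArev : Reversible ν KDA)
    (clo C : ℝ) (hclo : 0 ≤ clo)
    (hwlo : ∀ᵐ x ∂μ, clo ≤ w x) (hwhi : ∀ᵐ x ∂μ, w x ≤ C) :
    ∀ g : X → ℝ, MemLp g 2 μ →
      clo * dir2 μ K g ≤ dir2 ν KDA g ∧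
      dir2 ν KDA g ≤ C * dir2 μ K g ∧
      dir2 ν KDA g
        = (1 / 2) * ∫ x, (∫ x', min (w x) (w x') * (g x - g x') ^ 2 ∂(K x)) ∂μ := by
  intro g hg
  obtain ⟨g', hg'm, hgg'⟩ := hg.aestronglyMeasurable.aemeasurable
  -- absolute continuity
  have hac : ν ≪ μ := by
    rw [hRN]; exact withDensity_absolutelyContinuous μ _
  -- null set transfer through the kernel
  have hker : ∀ S : Set X, MeasurableSet S → μ S = 0 → ∀ᵐ x ∂μ, K x S = 0 := by
    intro S hS hS0
    have h1 : ∫⁻ x, K x S ∂μ = (μ ⊗ₘ K) (Set.univ ×ˢ S) := by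
      rw [Measure.compProd_apply (MeasurableSet.univ.prod hS)]
      simp
    have h2 : (μ ⊗ₘ K) (Set.univ ×ˢ S) = (μ ⊗ₘ K) (S ×ˢ Set.univ) := by
      conv_lhs => rw [show (μ ⊗ₘ K) = μ.compProd K from rfl, hKrev]
      rw [Measure.map_apply measurable_swap (MeasurableSet.univ.prod hS)]
      congr 1
      ext p
      simp [Set.mem_prod, And.comm]
    have h3 : (μ ⊗ₘ K) (S ×ˢ Set.univ) = μ S := by
      rw [Measure.compProd_apply_prod hS MeasurableSet.univ]
      simp
    have h0 : ∫⁻ x, K x S ∂μ = 0 := by rw [h1, h2, h3, hS0]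
    exact (lintegral_eq_zero_iff (K.measurable_coe hS)).mp h0
  -- invariance of μ under K, at the level of lintegrals
  have hinv : ∀ h : X → ℝ≥0∞, Measurable h →
      ∫⁻ x, ∫⁻ y, h y ∂(K x) ∂μ = ∫⁻ x, h x ∂μ := by
    intro h hh
    have h1 : ∫⁻ x, ∫⁻ y, h y ∂(K x) ∂μ = ∫⁻ p, h p.2 ∂(μ ⊗ₘ K) :=
      (Measure.lintegral_compProd (hh.comp measurable_snd)).symm
    rw [h1]
    conv_lhs => rw [show (μ ⊗ₘ K) = μ.compProd K from rfl, hKrev]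
    rw [lintegral_map (f := fun p : X × X => h p.2) (hh.comp measurable_snd) measurable_swap]
    simp only [Prod.snd_swap]
    rw [Measure.lintegral_compProd (f := fun p : X × X => h p.1) (hh.comp measurable_fst)]
    simp
  -- replaced-function setup
  set N : Set X := toMeasurable μ {x | g x ≠ g' x} with hN
  have hNmeas : MeasurableSet N := measurableSet_toMeasurable _ _
  have hNnull : μ N = 0 := by
    rw [hN, measure_toMeasurable]
    exact hgg'
  have hsub : {x | g x ≠ g' x} ⊆ N := subset_toMeasurable _ _
  have hKN : ∀ᵐ x ∂μ, K x N = 0 := hker N hNmeas hNnull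
  -- key integrands
  set F : X → X → ℝ≥0∞ := fun x x' => ENNReal.ofReal ((g' x - g' x') ^ 2) with hF
  set mw : X → X → ℝ≥0∞ := fun x x' => ENNReal.ofReal (min (w x) (w x')) with hmw
  have hFm : Measurable (Function.uncurry F) := by
    apply Measurable.ennreal_ofReal
    exact ((hg'm.comp measurable_fst).sub (hg'm.comp measurable_snd)).pow_const 2
  have hmwFm : Measurable (fun p : X × X => mw p.1 p.2 * F p.1 p.2) := by
    refine Measurable.mul ?_ hFm
    exact ((hw_meas.comp measurable_fst).min (hw_meas.comp measurable_snd)).ennreal_ofReal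
  set Lfun : X → ℝ≥0∞ := fun x => ∫⁻ x', F x x' ∂(K x) with hLdef
  set Mfun : X → ℝ≥0∞ := fun x => ∫⁻ x', mw x x' * F x x' ∂(K x) with hMdef
  set Nfun : X → ℝ≥0∞ := fun x => ∫⁻ x', F x x' ∂(KDA x) with hNdef
  have hLm : Measurable Lfun := Measurable.lintegral_kernel_prod_right' (κ := K) hFm
  have hMm : Measurable Mfun := Measurable.lintegral_kernel_prod_right' (κ := K) hmwFm
  have hNm : Measurable Nfun := Measurable.lintegral_kernel_prod_right' (κ := KDA) hFm
  -- the scalar identity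
  have hscal : ∀ a b : ℝ, 0 ≤ a → 0 ≤ b → a * min 1 (b / a) = min a b := by
    intro a b ha hb
    rcases ha.eq_or_lt with h0 | hpos
    · simp [← h0, min_eq_left hb]
    · rw [mul_min_of_nonneg _ _ ha, mul_one, ← mul_div_assoc,
        mul_div_cancel_left₀ _ hpos.ne']
  -- pointwise identity: w(x) · ∫ F dKDA = ∫ min(w x, w x') F dK
  have hpoint : ∀ x, ENNReal.ofReal (w x) * Nfun x = Mfun x := by
    intro x
    set ρ : X → ℝ≥0∞ := fun x' => ENNReal.ofReal (min 1 (w x' / w x)) with hρ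
    have hρm : Measurable ρ :=
      (measurable_const.min (hw_meas.div measurable_const)).ennreal_ofReal
    have hFxm : Measurable (F x) := by
      apply Measurable.ennreal_ofReal
      exact (measurable_const.sub hg'm).pow_const 2
    have hrestr : (KDA x).restrict {x}ᶜ = ((K x).withDensity ρ).restrict {x}ᶜ := by
      ext A hA
      rw [Measure.restrict_apply hA, Measure.restrict_apply hA]
      have hAe : A ∩ {x}ᶜ = A \ {x} := (Set.diff_eq A {x}).symm
      rw [hAe, hKDA x A hA, withDensity_apply _ (hA.diff (measurableSet_singleton x))]
    have hsplit : ∀ (m : Measure X) (H : X → ℝ≥0∞), H x = 0 →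
        ∫⁻ y, H y ∂m = ∫⁻ y in {x}ᶜ, H y ∂m := by
      intro m H hH
      rw [← lintegral_add_compl H (measurableSet_singleton x), lintegral_singleton, hH]
      simp
    have hFx0 : F x x = 0 := by simp [hF]
    calc ENNReal.ofReal (w x) * Nfun x
        = ENNReal.ofReal (w x) * ∫⁻ y in {x}ᶜ, F x y ∂(KDA x) :=
          congrArg (ENNReal.ofReal (w x) * ·) (hsplit (KDA x) (F x) hFx0)
      _ = ENNReal.ofReal (w x) * ∫⁻ y in {x}ᶜ, F x y ∂((K x).withDensity ρ) := by
          rw [hrestr]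
      _ = ENNReal.ofReal (w x) * ∫⁻ y in {x}ᶜ, ρ y * F x y ∂(K x) := by
          rw [restrict_withDensity (measurableSet_singleton x).compl,
            lintegral_withDensity_eq_lintegral_mul _ hρm hFxm]
          rfl
      _ = ∫⁻ y in {x}ᶜ, ENNReal.ofReal (w x) * (ρ y * F x y) ∂(K x) := by
          rw [lintegral_const_mul _ (f := fun y => ρ y * F x y) (hρm.mul hFxm)]
      _ = ∫⁻ y in {x}ᶜ, mw x y * F x y ∂(K x) := by
          congr 1
          ext y
          rw [← mul_assoc]
          congr 1
          rw [hρ, hmw, ← ENNReal.ofReal_mul (hw_nonneg x)]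
          congr 1
          exact hscal (w x) (w y) (hw_nonneg x) (hw_nonneg y)
      _ = Mfun x := (hsplit (K x) _ (by rw [hFx0, mul_zero])).symm
  -- the main identity in ℝ≥0∞
  have hNM : ∫⁻ x, Nfun x ∂ν = ∫⁻ x, Mfun x ∂μ := by
    rw [hRN, lintegral_withDensity_eq_lintegral_mul _ hw_meas.ennreal_ofReal hNm]
    exact lintegral_congr fun x => hpoint x
  -- finiteness of the base Dirichlet lintegral
  have hL2 : ∫⁻ x, ENNReal.ofReal (g' x ^ 2) ∂μ < ∞ := by
    have hint : Integrable (fun x => g x ^ 2) μ := hg.integrable_sq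
    have heq : ∫⁻ x, ENNReal.ofReal (g' x ^ 2) ∂μ = ∫⁻ x, ENNReal.ofReal (g x ^ 2) ∂μ :=
      lintegral_congr_ae (hgg'.mono fun x hx => by simp only [hx])
    rw [heq]
    refine lt_of_le_of_lt (lintegral_mono fun x => ?_) hint.2
    rw [← Real.enorm_eq_ofReal (sq_nonneg _)]
  have hLfin : ∫⁻ x, Lfun x ∂μ < ∞ := by
    have hb : ∀ x, Lfun x ≤
        2 * ENNReal.ofReal (g' x ^ 2) + 2 * ∫⁻ y, ENNReal.ofReal (g' y ^ 2) ∂(K x) := by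
      intro x
      have hbb : ∀ y, F x y ≤ 2 * ENNReal.ofReal (g' x ^ 2) + 2 * ENNReal.ofReal (g' y ^ 2) := by
        intro y
        rw [hF]
        calc ENNReal.ofReal ((g' x - g' y) ^ 2)
            ≤ ENNReal.ofReal (2 * g' x ^ 2 + 2 * g' y ^ 2) :=
              ENNReal.ofReal_le_ofReal (by nlinarith [sq_nonneg (g' x + g' y)])
          _ = 2 * ENNReal.ofReal (g' x ^ 2) + 2 * ENNReal.ofReal (g' y ^ 2) := by
              rw [ENNReal.ofReal_add (by positivity) (by positivity),
                ENNReal.ofReal_mul (by norm_num), ENNReal.ofReal_mul (by norm_num)]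
              norm_num
      calc Lfun x ≤ ∫⁻ y, (2 * ENNReal.ofReal (g' x ^ 2) + 2 * ENNReal.ofReal (g' y ^ 2)) ∂(K x) :=
            lintegral_mono hbb
        _ = 2 * ENNReal.ofReal (g' x ^ 2) + 2 * ∫⁻ y, ENNReal.ofReal (g' y ^ 2) ∂(K x) := by
            rw [lintegral_add_left measurable_const,
              lintegral_const_mul _ (hg'm.pow_const 2).ennreal_ofReal]
            simp
    calc ∫⁻ x, Lfun x ∂μ
        ≤ ∫⁻ x, (2 * ENNReal.ofReal (g' x ^ 2)
            + 2 * ∫⁻ y, ENNReal.ofReal (g' y ^ 2) ∂(K x)) ∂μ := lintegral_mono hb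
      _ = 2 * ∫⁻ x, ENNReal.ofReal (g' x ^ 2) ∂μ
            + 2 * ∫⁻ x, ∫⁻ y, ENNReal.ofReal (g' y ^ 2) ∂(K x) ∂μ := by
          have hmeasI : Measurable fun x => ∫⁻ y, ENNReal.ofReal (g' y ^ 2) ∂(K x) :=
            Measurable.lintegral_kernel_prod_right' (κ := K)
              (f := fun p : X × X => ENNReal.ofReal (g' p.2 ^ 2))
              ((hg'm.comp measurable_snd).pow_const 2).ennreal_ofReal
          rw [lintegral_add_left (f := fun x => 2 * ENNReal.ofReal (g' x ^ 2)) ((measurable_const.mul (hg'm.pow_const 2).ennreal_ofReal)),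
            lintegral_const_mul _ (f := fun x => ENNReal.ofReal (g' x ^ 2)) (hg'm.pow_const 2).ennreal_ofReal,
            lintegral_const_mul _ hmeasI]
      _ = 2 * ∫⁻ x, ENNReal.ofReal (g' x ^ 2) ∂μ
            + 2 * ∫⁻ x, ENNReal.ofReal (g' x ^ 2) ∂μ := by
          rw [hinv _ (hg'm.pow_const 2).ennreal_ofReal]
      _ < ∞ := by
          have := hL2.ne
          finiteness
  -- min bounds a.e.
  set S : Set X := {x | ¬(clo ≤ w x ∧ w x ≤ C)} with hS
  have hSmeas : MeasurableSet S :=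
    ((measurableSet_le measurable_const hw_meas).inter
      (measurableSet_le hw_meas measurable_const)).compl
  have hSnull : μ S = 0 := by
    rw [hS]
    exact ae_iff.mp (hwlo.and hwhi)
  have hKS : ∀ᵐ x ∂μ, K x S = 0 := hker S hSmeas hSnull
  have hMbounds : ∀ᵐ x ∂μ,
      ENNReal.ofReal clo * Lfun x ≤ Mfun x ∧ Mfun x ≤ ENNReal.ofReal C * Lfun x := by
    filter_upwards [hKS, hwlo, hwhi] with x hKx hlx hhx
    have hFxm : Measurable (F x) := by
      apply Measurable.ennreal_ofReal
      exact (measurable_const.sub hg'm).pow_const 2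
    have hae : ∀ᵐ y ∂(K x), clo ≤ w y ∧ w y ≤ C := by
      refine ae_iff.mpr (measure_mono_null (fun y hy => ?_) hKx)
      rw [hS]; exact hy
    constructor
    · rw [hLdef, ← lintegral_const_mul _ hFxm]
      refine lintegral_mono_ae (hae.mono fun y hy => ?_)
      exact mul_le_mul_left
        (ENNReal.ofReal_le_ofReal (le_min hlx hy.1)) _
    · rw [hLdef, ← lintegral_const_mul _ hFxm]
      refine lintegral_mono_ae (hae.mono fun y hy => ?_)
      exact mul_le_mul_left
        (ENNReal.ofReal_le_ofReal ((min_le_left _ _).trans hhx)) _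
  have hMlow : ENNReal.ofReal clo * ∫⁻ x, Lfun x ∂μ ≤ ∫⁻ x, Mfun x ∂μ := by
    rw [← lintegral_const_mul _ hLm]
    exact lintegral_mono_ae (hMbounds.mono fun x h => h.1)
  have hMhigh : ∫⁻ x, Mfun x ∂μ ≤ ENNReal.ofReal C * ∫⁻ x, Lfun x ∂μ := by
    rw [← lintegral_const_mul _ hLm]
    exact lintegral_mono_ae (hMbounds.mono fun x h => h.2)
  have hMfin : ∫⁻ x, Mfun x ∂μ < ∞ :=
    lt_of_le_of_lt hMhigh (ENNReal.mul_lt_top ENNReal.ofReal_lt_top hLfin)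
  -- real conversions
  have hdirK : dir2 μ K g = (1 / 2) * (∫⁻ x, Lfun x ∂μ).toReal := by
    unfold dir2
    congr 1
    have step1 : (fun x => ∫ x', (g x - g x') ^ 2 ∂(K x)) =ᵐ[μ]
        fun x => (Lfun x).toReal := by
      filter_upwards [hKN, hgg'] with x hKx hgx
      have hgae : g =ᵐ[K x] g' :=
        ae_iff.mpr (measure_mono_null (fun y hy => hsub hy) hKx)
      have h1 : ∫ x', (g x - g x') ^ 2 ∂(K x) = ∫ x', (g' x - g' x') ^ 2 ∂(K x) :=
        integral_congr_ae (hgae.mono fun y hy => by simp only [hy, hgx])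
      rw [h1, integral_eq_lintegral_of_nonneg_ae (f := fun y => (g' x - g' y) ^ 2)
        (Filter.Eventually.of_forall fun y => sq_nonneg _)
        ((measurable_const.sub hg'm).pow_const 2).aestronglyMeasurable]
    rw [integral_congr_ae step1,
      integral_toReal hLm.aemeasurable (ae_lt_top hLm hLfin.ne)]
  have hdirmin : ∫ x, (∫ x', min (w x) (w x') * (g x - g x') ^ 2 ∂(K x)) ∂μ
      = (∫⁻ x, Mfun x ∂μ).toReal := by
    have step1 : (fun x => ∫ x', min (w x) (w x') * (g x - g x') ^ 2 ∂(K x)) =ᵐ[μ]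
        fun x => (Mfun x).toReal := by
      filter_upwards [hKN, hgg'] with x hKx hgx
      have hgae : g =ᵐ[K x] g' :=
        ae_iff.mpr (measure_mono_null (fun y hy => hsub hy) hKx)
      have h1 : ∫ x', min (w x) (w x') * (g x - g x') ^ 2 ∂(K x)
          = ∫ x', min (w x) (w x') * (g' x - g' x') ^ 2 ∂(K x) :=
        integral_congr_ae (hgae.mono fun y hy => by simp only [hy, hgx])
      rw [h1, integral_eq_lintegral_of_nonneg_ae (f := fun y => min (w x) (w y) * (g' x - g' y) ^ 2)
        (Filter.Eventually.of_forall fun y =>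
          mul_nonneg (le_min (hw_nonneg x) (hw_nonneg y)) (sq_nonneg _))
        (((measurable_const.min hw_meas).mul
          ((measurable_const.sub hg'm).pow_const 2)).aestronglyMeasurable)]
      congr 1
      refine lintegral_congr fun y => ?_
      rw [ENNReal.ofReal_mul (le_min (hw_nonneg x) (hw_nonneg y))]
    rw [integral_congr_ae step1,
      integral_toReal hMm.aemeasurable (ae_lt_top hMm hMfin.ne)]
  have hdirDA : dir2 ν KDA g = (1 / 2) * (∫⁻ x, Nfun x ∂ν).toReal := by
    unfold dir2
    congr 1
    have hKNν : ∀ᵐ x ∂ν, KDA x N = 0 := by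
      have h1 : ∀ᵐ x ∂ν, K x N = 0 := hKN.filter_mono hac.ae_le
      have h2 : ∀ᵐ x ∂ν, x ∉ N := measure_eq_zero_iff_ae_notMem.mp (hac hNnull)
      filter_upwards [h1, h2] with x hKx hxN
      have hdiff : N \ {x} = N := Set.diff_singleton_eq_self hxN
      have h0 : (K x).restrict (N \ {x}) = 0 := by
        rw [Measure.restrict_eq_zero, hdiff]
        exact hKx
      calc KDA x N = KDA x (N \ {x}) := by rw [hdiff]
        _ = ∫⁻ x' in N \ {x}, ENNReal.ofReal (min 1 (w x' / w x)) ∂(K x) :=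
            hKDA x N hNmeas
        _ = 0 := by rw [show (∫⁻ x' in N \ {x}, ENNReal.ofReal (min 1 (w x' / w x)) ∂(K x))
              = ∫⁻ x', ENNReal.ofReal (min 1 (w x' / w x)) ∂((K x).restrict (N \ {x})) from rfl,
              h0, lintegral_zero_measure]
    have step1 : (fun x => ∫ x', (g x - g x') ^ 2 ∂(KDA x)) =ᵐ[ν]
        fun x => (Nfun x).toReal := by
      filter_upwards [hKNν, hgg'.filter_mono hac.ae_le] with x hKx hgx
      have hgae : g =ᵐ[KDA x] g' :=
        ae_iff.mpr (measure_mono_null (fun y hy => hsub hy) hKx)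
      have h1 : ∫ x', (g x - g x') ^ 2 ∂(KDA x) = ∫ x', (g' x - g' x') ^ 2 ∂(KDA x) :=
        integral_congr_ae (hgae.mono fun y hy => by simp only [hy, hgx])
      rw [h1, integral_eq_lintegral_of_nonneg_ae (f := fun y => (g' x - g' y) ^ 2)
        (Filter.Eventually.of_forall fun y => sq_nonneg _)
        ((measurable_const.sub hg'm).pow_const 2).aestronglyMeasurable]
    have hNfin : ∫⁻ x, Nfun x ∂ν < ∞ := by rw [hNM]; exact hMfin
    rw [integral_congr_ae step1,
      integral_toReal hNm.aemeasurable (ae_lt_top hNm hNfin.ne)]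
  -- C is nonnegative
  have hC : 0 ≤ C := by
    obtain ⟨x, hx1, hx2⟩ := (hwlo.and hwhi).exists
    exact hclo.trans (hx1.trans hx2)
  -- conclude
  have hLR : (ENNReal.ofReal clo * ∫⁻ x, Lfun x ∂μ).toReal
      = clo * (∫⁻ x, Lfun x ∂μ).toReal := by
    rw [ENNReal.toReal_mul, ENNReal.toReal_ofReal hclo]
  have hCR : (ENNReal.ofReal C * ∫⁻ x, Lfun x ∂μ).toReal
      = C * (∫⁻ x, Lfun x ∂μ).toReal := by
    rw [ENNReal.toReal_mul, ENNReal.toReal_ofReal hC]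
  refine ⟨?_, ?_, ?_⟩
  · rw [hdirK, hdirDA, hNM]
    have h := ENNReal.toReal_mono hMfin.ne hMlow
    rw [hLR] at h
    linarith
  · rw [hdirK, hdirDA, hNM]
    have h := ENNReal.toReal_mono
      (ENNReal.mul_lt_top ENNReal.ofReal_lt_top hLfin).ne hMhigh
    rw [hCR] at h
    linarith
  · rw [hdirDA, hNM, hdirmin]
end

section
/- If two reversible kernels P and M on possibly different augmentations agree on functions not depending on the extra coordinate — specifically if g(θ,u,v) = g(θ,v) does not depend on u and P^k g(θ,u,v) = M^k g(θ,v) for all k ≥ 1 — then the asymptotic variances coincide: var(P, g) = var(M, g). -/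
open MeasureTheory ProbabilityTheory Filter
open scoped ENNReal

section Aux

open MeasureTheory Filter
variable {X : Type*} [MeasurableSpace X]

lemma reversible_invariant (μ : Measure X) [IsProbabilityMeasure μ]
    (K : Kernel X X) [IsMarkovKernel K] (hrev : Reversible μ K) : Invariant μ K := by
  unfold Invariant
  ext t ht
  have h1 : μ.bind (fun x => K x) t = (μ.compProd K) (Set.univ ×ˢ t) := by
    rw [Measure.bind_apply ht (Kernel.measurable K).aemeasurable,
      Measure.compProd_apply_prod MeasurableSet.univ ht, Measure.restrict_univ]
  rw [h1, hrev, Measure.map_apply measurable_swap (MeasurableSet.univ.prod ht),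
    Set.preimage_swap_prod, Measure.compProd_apply_prod ht MeasurableSet.univ]
  simp

variable (μ : Measure X) [IsProbabilityMeasure μ] (K : Kernel X X) [IsMarkovKernel K]

/-- Transfer of a.e. equality from `μ` to `K x` for a.e. `x`, using invariance. -/
lemma ae_kernel_of_ae (hinv : Invariant μ K) {f g : X → ℝ} (hae : f =ᵐ[μ] g) :
    ∀ᵐ x ∂μ, f =ᵐ[K x] g := by
  set N := toMeasurable μ {x | f x ≠ g x} with hN
  have hNnull : μ N = 0 := by
    rw [measure_toMeasurable]
    exact hae
  have hNmeas : MeasurableSet N := measurableSet_toMeasurable _ _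
  have hbind : μ.bind (fun x => K x) N = 0 := by rw [hinv]; exact hNnull
  rw [Measure.bind_apply hNmeas (Kernel.measurable K).aemeasurable] at hbind
  have h0 : ∀ᵐ x ∂μ, K x N = 0 := by
    rw [lintegral_eq_zero_iff (Kernel.measurable_coe K hNmeas)] at hbind
    exact hbind
  filter_upwards [h0] with x hx
  exact measure_mono_null (subset_toMeasurable _ _) hx

lemma kOp_stronglyMeasurable {f : X → ℝ} (hf : StronglyMeasurable f) :
    StronglyMeasurable (kOp K f) := by
  have : StronglyMeasurable fun p : X × X => f p.2 :=
    hf.comp_measurable measurable_snd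
  exact this.integral_kernel_prod_right'

lemma lintegral_kernel_eq (hinv : Invariant μ K) {f : X → ℝ} (hf : StronglyMeasurable f) :
    ∫⁻ x, (∫⁻ y, ‖f y‖₊ ∂(K x)) ∂μ = ∫⁻ y, ‖f y‖₊ ∂μ := by
  rw [← Measure.lintegral_bind (Kernel.measurable K).aemeasurable hf.measurable.nnnorm.coe_nnreal_ennreal.aemeasurable, hinv]

lemma ae_integrable_kernel (hinv : Invariant μ K) {f : X → ℝ} (hf : StronglyMeasurable f)
    (hint : Integrable f μ) : ∀ᵐ x ∂μ, Integrable f (K x) := by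
  have hfin : ∫⁻ x, (∫⁻ y, ‖f y‖₊ ∂(K x)) ∂μ < ⊤ := by
    rw [lintegral_kernel_eq μ K hinv hf]
    exact hint.2
  have := ae_lt_top (Measurable.lintegral_kernel_prod_right'
    (f := fun p : X × X => (‖f p.2‖₊ : ENNReal)) (hf.measurable.enorm.comp measurable_snd))
    hfin.ne
  filter_upwards [this] with x hx
  exact ⟨hf.aestronglyMeasurable, hx⟩

lemma integrable_kOp (hinv : Invariant μ K) {f : X → ℝ} (hf : StronglyMeasurable f)
    (hint : Integrable f μ) : Integrable (kOp K f) μ := by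
  refine ⟨(kOp_stronglyMeasurable K hf).aestronglyMeasurable, ?_⟩
  have hb : ∀ x, (‖kOp K f x‖₊ : ENNReal) ≤ ∫⁻ y, ‖f y‖₊ ∂(K x) := fun x =>
    enorm_integral_le_lintegral_enorm _
  calc ∫⁻ x, ‖kOp K f x‖₊ ∂μ ≤ ∫⁻ x, (∫⁻ y, ‖f y‖₊ ∂(K x)) ∂μ := lintegral_mono hb
    _ = ∫⁻ y, ‖f y‖₊ ∂μ := lintegral_kernel_eq μ K hinv hf
    _ < ⊤ := hint.2

/-- Key lemma: iterates of the Markov operator behave well a.e. -/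
lemma kIter_key (hinv : Invariant μ K) {f f₀ : X → ℝ} (hf₀ : StronglyMeasurable f₀)
    (hae : f =ᵐ[μ] f₀) (hint : Integrable f₀ μ) (c : ℝ) : ∀ k : ℕ,
    StronglyMeasurable (kIter K k f₀) ∧ Integrable (kIter K k f₀) μ ∧
    kIter K k f =ᵐ[μ] kIter K k f₀ ∧
    kIter K k (fun x => f x - c) =ᵐ[μ] fun x => kIter K k f₀ x - c
  | 0 => ⟨hf₀, hint, hae, hae.mono fun x hx => by simp only [kIter, hx]⟩
  | (k+1) => by
    obtain ⟨hS, hSint, hEq, hEqC⟩ := kIter_key hinv hf₀ hae hint c k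
    have hsm' : StronglyMeasurable (kIter K (k+1) f₀) := kOp_stronglyMeasurable K hS
    have hint' : Integrable (kIter K (k+1) f₀) μ := integrable_kOp μ K hinv hS hSint
    have hK1 : ∀ᵐ x ∂μ, kIter K k f =ᵐ[K x] kIter K k f₀ := ae_kernel_of_ae μ K hinv hEq
    have hK2 : ∀ᵐ x ∂μ, kIter K k (fun x => f x - c) =ᵐ[K x] fun x => kIter K k f₀ x - c :=
      ae_kernel_of_ae μ K hinv hEqC
    have hKint : ∀ᵐ x ∂μ, Integrable (kIter K k f₀) (K x) :=
      ae_integrable_kernel μ K hinv hS hSint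
    refine ⟨hsm', hint', ?_, ?_⟩
    · filter_upwards [hK1] with x hx
      exact integral_congr_ae hx
    · filter_upwards [hK2, hKint] with x hx hxi
      show kOp K (kIter K k fun x => f x - c) x = kOp K (kIter K k f₀) x - c
      unfold kOp
      rw [integral_congr_ae hx, integral_sub hxi (integrable_const c), integral_const]
      simp

end Aux

/-- If a π-reversible Harris ergodic kernel `P` on `T×U×V` and a
kernel `M` on `T×V` (reversible for the marginal of `π`) satisfy
`P^k g(θ,u,v) = M^k g(θ,v)` for all `k ≥ 1`, for a function `g` not depending on `u`,
then the asymptotic variances coincide: `var(P, g) = var(M, g)`. -/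
theorem asymptotic_variance_collapse
    {T U V : Type*} [MeasurableSpace T] [MeasurableSpace U] [MeasurableSpace V]
    (π1 : Measure (T × U × V)) [IsProbabilityMeasure π1]
    (P : Kernel (T × U × V) (T × U × V)) [IsMarkovKernel P]
    (hPrev : Reversible π1 P) (hPerg : HarrisErgodic π1 P)
    (π2 : Measure (T × V))
    (hπ2 : π2 = π1.map (fun x => (x.1, x.2.2)))
    (M : Kernel (T × V) (T × V)) [IsMarkovKernel M]
    (hMrev : Reversible π2 M)
    (g : T × V → ℝ) (hg : MemLp g 2 π2)
    (hiter : ∀ k : ℕ, 1 ≤ k → ∀ x : T × U × V,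
      kIter P k (fun z => g (z.1, z.2.2)) x = kIter M k g (x.1, x.2.2)) :
    ∀ v : ℝ, IsAvar π1 P (fun z => g (z.1, z.2.2)) v ↔ IsAvar π2 M g v := by
  intro v
  have hproj : Measurable (fun x : T × U × V => (x.1, x.2.2)) :=
    measurable_fst.prodMk (measurable_snd.comp measurable_snd)
  haveI : IsProbabilityMeasure π2 := hπ2 ▸ Measure.isProbabilityMeasure_map hproj.aemeasurable
  set c : ℝ := ∫ y, g y ∂π2 with hc
  obtain ⟨g₀, hg₀sm, hgg₀⟩ := hg.aestronglyMeasurable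
  have hgint : Integrable g π2 := hg.integrable one_le_two
  have hg₀int : Integrable g₀ π2 := hgint.congr hgg₀
  have hinvM : Invariant π2 M := reversible_invariant π2 M hMrev
  have hinvP : Invariant π1 P := hPerg.1
  set g' : T × U × V → ℝ := fun z => g (z.1, z.2.2) with hg'def
  set g₀' : T × U × V → ℝ := fun z => g₀ (z.1, z.2.2) with hg₀'def
  have hg₀'sm : StronglyMeasurable g₀' := hg₀sm.comp_measurable hproj
  have hgg₀' : g' =ᵐ[π1] g₀' :=
    ae_of_ae_map hproj.aemeasurable (show ∀ᵐ y ∂π1.map _, g y = g₀ y from hπ2 ▸ hgg₀)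
  have hg₀'int : Integrable g₀' π1 := by
    have := (integrable_map_measure hg₀sm.aestronglyMeasurable hproj.aemeasurable).mp
      (hπ2 ▸ hg₀int)
    exact this
  have hcg' : ∫ z, g' z ∂π1 = c := by
    rw [hc, hπ2, integral_map hproj.aemeasurable (hπ2 ▸ hg.aestronglyMeasurable)]
  have KM := kIter_key π2 M hinvM hg₀sm hgg₀ hg₀int c
  have KP := kIter_key π1 P hinvP hg₀'sm hgg₀' hg₀'int c
  have hiter' : ∀ k (x : T × U × V), kIter P k g' x = kIter M k g (x.1, x.2.2) := by
    intro k x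
    cases k with
    | zero => rfl
    | succ k => exact hiter (k + 1) (Nat.succ_le_succ (Nat.zero_le k)) x
  have cross : ∀ k, ∀ᵐ x ∂π1, kIter P k g₀' x = kIter M k g₀ (x.1, x.2.2) := by
    intro k
    have h2 : ∀ᵐ x ∂π1, kIter M k g (x.1, x.2.2) = kIter M k g₀ (x.1, x.2.2) :=
      ae_of_ae_map hproj.aemeasurable
        (show ∀ᵐ y ∂π1.map _, kIter M k g y = kIter M k g₀ y from hπ2 ▸ (KM k).2.2.1)
    filter_upwards [(KP k).2.2.1, h2] with x hx1 hx2
    rw [← hx1, hiter' k x, hx2]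
  have hcen1 : center π1 g' = fun x => g' x - c := by
    funext x; rw [center, hcg']
  have hcen2 : center π2 g = fun y => g y - c := by
    funext y; rw [center, ← hc]
  have hterm : ∀ d : ℕ,
      ∫ x, center π1 g' x * kIter P d (center π1 g') x ∂π1
        = ∫ y, center π2 g y * kIter M d (center π2 g) y ∂π2 := by
    intro d
    rw [hcen1, hcen2]
    have hsmF : StronglyMeasurable fun y => (g₀ y - c) * (kIter M d g₀ y - c) :=
      (hg₀sm.sub stronglyMeasurable_const).mul ((KM d).1.sub stronglyMeasurable_const)
    have e1 : ∫ x, (g' x - c) * kIter P d (fun x => g' x - c) x ∂π1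
        = ∫ x, (g₀ (x.1, x.2.2) - c) * (kIter M d g₀ (x.1, x.2.2) - c) ∂π1 := by
      refine integral_congr_ae ?_
      filter_upwards [hgg₀', (KP d).2.2.2, cross d] with x h1 h2 h3
      simp only [h1, h2, h3]; rfl
    have e3 : ∫ y, (g y - c) * kIter M d (fun y => g y - c) y ∂π2
        = ∫ y, (g₀ y - c) * (kIter M d g₀ y - c) ∂π2 := by
      refine integral_congr_ae ?_
      filter_upwards [hgg₀, (KM d).2.2.2] with y h1 h2
      simp only [h1, h2]
    rw [e1, e3, hπ2]
    exact (integral_map hproj.aemeasurable hsmF.aestronglyMeasurable).symm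
  have hseq : avarSeq π1 P g' = avarSeq π2 M g := by
    funext n
    unfold avarSeq
    congr 1
    refine Finset.sum_congr rfl fun i _ => Finset.sum_congr rfl fun j _ => ?_
    exact hterm (max i j - min i j)
  simp only [IsAvar, hseq]
end
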